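/- For every m ∈ ℕ₀ and every t ∈ ℝ, the integral √2 ∫_0^∞ e^{−2ω} L_m(2ω) e^{2iωt} dω converges and equals −(1/√2) (it)^m/(it−1)^{m+1}. -/

import Mathlib

open Real Finset Complex MeasureTheory

lemma auxNorm {c : ℂ} (x : ℝ) (hx0 : 0 ≤ x) (k : ℕ) :
    ‖(x : ℂ) ^ k * Complex.exp (-(c * x))‖ = x ^ k * Real.exp (-(c.re * x)) := by
  have h1 : (-(c * (x:ℂ))).re = -(c.re * x) := by simp [Complex.mul_re]
  simp only [norm_mul, norm_pow, Complex.norm_exp, h1,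
    Complex.norm_real, Real.norm_eq_abs, _root_.abs_of_nonneg hx0]

lemma auxIntR {b : ℝ} (hb : 0 < b) (k : ℕ) :
    IntegrableOn (fun x : ℝ => x ^ k * Real.exp (-(b * x))) (Set.Ioi 0) := by
  have h := integrableOn_rpow_mul_exp_neg_mul_rpow (p := 1) (s := (k : ℝ)) (b := b)
    (by exact_mod_cast neg_one_lt_zero.trans_le (Nat.cast_nonneg k)) zero_lt_one hb
  simpa [Real.rpow_natCast, Real.rpow_one, neg_mul] using h

lemma auxIntC {c : ℂ} (hc : 0 < c.re) (k : ℕ) :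
    IntegrableOn (fun x : ℝ => (x : ℂ) ^ k * Complex.exp (-(c * x))) (Set.Ioi 0) := by
  refine Integrable.mono' (auxIntR hc k) ?_ ?_
  · exact (Continuous.aestronglyMeasurable (by continuity)).restrict
  · filter_upwards [ae_restrict_mem measurableSet_Ioi] with x hx
    rw [auxNorm x (le_of_lt hx)]

lemma auxTendsto {c : ℂ} (hc : 0 < c.re) (k : ℕ) :
    Filter.Tendsto (fun x : ℝ => (x : ℂ) ^ k * Complex.exp (-(c * x))) Filter.atTop (nhds 0) := by
  rw [tendsto_zero_iff_norm_tendsto_zero]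
  have h := tendsto_rpow_mul_exp_neg_mul_atTop_nhds_zero (k : ℝ) c.re hc
  refine h.congr' ?_
  filter_upwards [Filter.eventually_ge_atTop (0:ℝ)] with x hx
  rw [auxNorm x hx, Real.rpow_natCast, neg_mul]

lemma auxVal {c : ℂ} (hc : 0 < c.re) (k : ℕ) :
    ∫ x in Set.Ioi (0:ℝ), (x : ℂ) ^ k * Complex.exp (-(c * x))
      = (Nat.factorial k : ℂ) / c ^ (k + 1) := by
  have hc0 : c ≠ 0 := fun h => by simp [h] at hc
  induction k with
  | zero =>
    have hderiv : ∀ x : ℝ, HasDerivAt (fun x : ℝ => -Complex.exp (-(c * x)) / c)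
        ((x : ℂ) ^ 0 * Complex.exp (-(c * x))) x := by
      intro x
      have hre : HasDerivAt (fun x : ℝ => (x : ℂ)) 1 x := Complex.ofRealCLM.hasDerivAt
      have h2 := (((hre.const_mul c).neg).cexp).neg.div_const c
      refine h2.congr_deriv ?_
      simp only [Pi.neg_apply]
      field_simp
    have htend : Filter.Tendsto (fun x : ℝ => -Complex.exp (-(c * x)) / c)
        Filter.atTop (nhds 0) := by
      have := ((auxTendsto hc 0).neg).div_const c
      simpa using this
    have h := integral_Ioi_of_hasDerivAt_of_tendsto' (fun x _ => hderiv x)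
      (auxIntC hc 0) htend
    rw [h]
    norm_num
    ring
  | succ k ih =>
    have hderiv : ∀ x : ℝ, HasDerivAt (fun x : ℝ => -((x : ℂ) ^ (k + 1) * Complex.exp (-(c * x))) / c)
        ((x : ℂ) ^ (k + 1) * Complex.exp (-(c * x))
          - ((k + 1 : ℂ) / c) * ((x : ℂ) ^ k * Complex.exp (-(c * x)))) x := by
      intro x
      have hre : HasDerivAt (fun x : ℝ => (x : ℂ)) 1 x := Complex.ofRealCLM.hasDerivAt
      have hpow := (hasDerivAt_pow (k + 1) ((x : ℝ) : ℂ)).comp_ofReal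
      have hexp := ((hre.const_mul c).neg).cexp
      have h2 := ((hpow.mul hexp).neg).div_const c
      refine h2.congr_deriv ?_
      simp only [Pi.neg_apply]
      simp only [Nat.add_sub_cancel]
      field_simp
      push_cast
      ring
    have htend : Filter.Tendsto (fun x : ℝ => -((x : ℂ) ^ (k + 1) * Complex.exp (-(c * x))) / c)
        Filter.atTop (nhds 0) := by
      have := ((auxTendsto hc (k + 1)).neg).div_const c
      simpa using this
    have hint' : IntegrableOn (fun x : ℝ =>
        (x : ℂ) ^ (k + 1) * Complex.exp (-(c * x))
          - ((k + 1 : ℂ) / c) * ((x : ℂ) ^ k * Complex.exp (-(c * x)))) (Set.Ioi 0) :=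
      (auxIntC hc (k + 1)).sub ((auxIntC hc k).const_mul _)
    have h := integral_Ioi_of_hasDerivAt_of_tendsto' (fun x _ => hderiv x) hint' htend
    rw [integral_sub (auxIntC hc (k + 1)) ((auxIntC hc k).const_mul _),
      MeasureTheory.integral_const_mul, ih] at h
    norm_num at h
    rw [sub_eq_zero] at h
    rw [h, Nat.factorial_succ, pow_succ _ (k + 1)]
    push_cast
    rw [div_mul_div_comm]
    ring

/-- The `m`-th Laguerre polynomial `L_m(x) = ∑_{k=0}^m C(m,k)(−1)^k x^k/k!`. -/
noncomputable def lagPoly (m : ℕ) (x : ℝ) : ℝ :=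
  ∑ k ∈ Finset.range (m + 1), (Nat.choose m k : ℝ) * (-1) ^ k / (Nat.factorial k : ℝ) * x ^ k

/-- The Fourier-type integral `√2 ∫_0^∞ e^{−2ω} L_m(2ω) e^{2iωt} dω` converges and
equals the complex-valued Cauchy–Laguerre function `−(1/√2)(it)^m/(it−1)^{m+1}`. -/
theorem cauchyLag_integral_formula (m : ℕ) (t : ℝ) :
    IntegrableOn
        (fun ω : ℝ =>
          (Real.exp (-(2 * ω)) * lagPoly m (2 * ω) : ℂ) * Complex.exp (2 * Complex.I * ω * t))
        (Set.Ioi (0 : ℝ)) ∧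
      (Real.sqrt 2 : ℂ) *
          ∫ ω in Set.Ioi (0 : ℝ),
            (Real.exp (-(2 * ω)) * lagPoly m (2 * ω) : ℂ) * Complex.exp (2 * Complex.I * ω * t) =
        -(1 / (Real.sqrt 2 : ℂ)) * (Complex.I * t) ^ m / (Complex.I * t - 1) ^ (m + 1) := by
  set c : ℂ := 2 - 2 * Complex.I * t with hc_def
  have hcre : c.re = 2 := by simp [hc_def, Complex.sub_re, Complex.mul_re, Complex.mul_im]
  have hc : 0 < c.re := by rw [hcre]; norm_num
  have hc0 : c ≠ 0 := fun h => by simp [h] at hc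
  have hfun : ∀ ω : ℝ,
      (Real.exp (-(2 * ω)) * lagPoly m (2 * ω) : ℂ) * Complex.exp (2 * Complex.I * ω * t)
        = ∑ k ∈ Finset.range (m + 1),
            ((m.choose k : ℂ) * (-1) ^ k / (Nat.factorial k : ℂ) * 2 ^ k)
              * ((ω : ℂ) ^ k * Complex.exp (-(c * ω))) := by
    intro ω
    have hexp : (Real.exp (-(2 * ω)) : ℂ) * Complex.exp (2 * Complex.I * ω * t)
        = Complex.exp (-(c * ω)) := by
      rw [Complex.ofReal_exp, ← Complex.exp_add]
      congr 1
      rw [hc_def]; push_cast; ring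
    rw [mul_comm ((Real.exp (-(2 * ω)) : ℝ) : ℂ) ((lagPoly m (2 * ω) : ℝ) : ℂ), mul_assoc, hexp]
    unfold lagPoly
    push_cast
    rw [Finset.sum_mul]
    refine Finset.sum_congr rfl fun k _ => ?_
    ring
  constructor
  · simp only [hfun]
    exact MeasureTheory.integrable_finset_sum _ fun k _ => ((auxIntC hc k).const_mul _)
  have hval : (∫ ω in Set.Ioi (0:ℝ),
        (Real.exp (-(2 * ω)) * lagPoly m (2 * ω) : ℂ) * Complex.exp (2 * Complex.I * ω * t))
      = ∑ k ∈ Finset.range (m + 1),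
          ((m.choose k : ℂ) * (-1) ^ k / (Nat.factorial k : ℂ) * 2 ^ k)
            * ((Nat.factorial k : ℂ) / c ^ (k + 1)) := by
    simp only [hfun]
    rw [MeasureTheory.integral_finset_sum _ fun k _ => ((auxIntC hc k).const_mul _)]
    refine Finset.sum_congr rfl fun k _ => ?_
    rw [MeasureTheory.integral_const_mul, auxVal hc k]
  rw [hval]
  have hterm : ∀ k ∈ Finset.range (m + 1),
      ((m.choose k : ℂ) * (-1) ^ k / (Nat.factorial k : ℂ) * 2 ^ k)
        * ((Nat.factorial k : ℂ) / c ^ (k + 1))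
      = (m.choose k : ℂ) * (-2) ^ k / c ^ (k + 1) := by
    intro k _
    have hf : (Nat.factorial k : ℂ) ≠ 0 := Nat.cast_ne_zero.mpr (Nat.factorial_ne_zero k)
    field_simp
    rw [neg_pow (2:ℂ) k]
    ring
  rw [Finset.sum_congr rfl hterm]
  have hsum : ∑ k ∈ Finset.range (m + 1), (m.choose k : ℂ) * (-2) ^ k / c ^ (k + 1)
      = (c - 2) ^ m / c ^ (m + 1) := by
    have h' : c - 2 = -2 + c := by ring
    rw [h', add_pow, Finset.sum_div]
    refine Finset.sum_congr rfl fun k hk => ?_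
    have hk' : k ≤ m := Nat.lt_succ_iff.mp (Finset.mem_range.mp hk)
    have hpow : c ^ (m + 1) = c ^ (m - k) * c ^ (k + 1) := by
      rw [← pow_add]; congr 1; omega
    rw [hpow]
    field_simp
  rw [hsum]
  have h1 : c - 2 = (-2) * (Complex.I * t) := by rw [hc_def]; ring
  have h2 : c = (-2) * (Complex.I * t - 1) := by rw [hc_def]; ring
  have hw : (Complex.I * (t : ℂ) - 1) ≠ 0 := by
    intro h
    have := congrArg Complex.re h
    simp [Complex.mul_re] at this
  have hs2 : (Real.sqrt 2 : ℂ) * (Real.sqrt 2 : ℂ) = 2 := by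
    norm_cast
    exact Real.mul_self_sqrt (by norm_num)
  have hs0 : (Real.sqrt 2 : ℂ) ≠ 0 := by
    simpa using (Complex.ofReal_ne_zero.mpr (by positivity : Real.sqrt 2 ≠ 0))
  have hm2 : ((-2 : ℂ)) ^ m ≠ 0 := pow_ne_zero _ (by norm_num)
  have hred : (-2:ℂ)^m * (Complex.I*t)^m / ((-2:ℂ) * (Complex.I*(t:ℂ)-1))^(m+1)
      = (Complex.I*t)^m / ((-2) * (Complex.I*(t:ℂ)-1)^(m+1)) := by
    rw [mul_pow (-2:ℂ) (Complex.I*(t:ℂ)-1) (m+1), pow_succ (-2:ℂ) m]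
    field_simp
  rw [h1, h2, mul_pow (-2 : ℂ) (Complex.I * t), hred]
  field_simp
  linear_combination (-(Complex.I * (t:ℂ)) ^ m) * hs2
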